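/- In the category StGrphs of multigraphs with strict graph morphisms, a morphism f : A → B is an epimorphism if and only if its part-set function f_P : P(A) → P(B) is surjective, and f is a monomorphism if and only if f_P is injective. -/

import Mathlib

/-- A multigraph: a vertex type, an edge type, and an incidence function
assigning to each edge an unordered pair of vertices. -/
structure Multigraph : Type 1 where
  V : Type
  E : Type
  ψ : E → Sym2 V

namespace Multigraph

/-- The part set of a multigraph: vertices together with edges. -/
abbrev Part (G : Multigraph) : Type := G.V ⊕ G.E

/-- The incidence function extended to parts: a vertex `v` is incident to `{v,v}`. -/
def incid (G : Multigraph) : G.Part → Sym2 G.V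
  | Sum.inl v => s(v, v)
  | Sum.inr e => G.ψ e

/-- A graph morphism: a function on part sets mapping vertices to vertices and
preserving incidence.  (The vertex map is recorded separately, but it is uniquely
determined by the part map.) -/
@[ext]
structure Hom (G H : Multigraph) where
  partMap : G.Part → H.Part
  vertMap : G.V → H.V
  partMap_vert : ∀ v : G.V, partMap (Sum.inl v) = Sum.inl (vertMap v)
  incid_partMap : ∀ p : G.Part, H.incid (partMap p) = (G.incid p).map vertMap

/-- The identity graph morphism. -/
def Hom.id (G : Multigraph) : Hom G G where
  partMap := _root_.id
  vertMap := _root_.id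
  partMap_vert := fun _ => rfl
  incid_partMap := fun p => by simp

/-- Composition of graph morphisms. -/
def Hom.comp {G H K : Multigraph} (g : Hom H K) (f : Hom G H) : Hom G K where
  partMap := g.partMap ∘ f.partMap
  vertMap := g.vertMap ∘ f.vertMap
  partMap_vert := fun v => by simp [f.partMap_vert, g.partMap_vert]
  incid_partMap := fun p => by
    simp [Function.comp, g.incid_partMap, f.incid_partMap, Sym2.map_map]

/-- A strict graph morphism: a graph morphism that moreover maps edges to edges. -/
@[ext]
structure StrictHom (G H : Multigraph) extends Hom G H where
  edgeMap : G.E → H.E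
  partMap_edge : ∀ e : G.E, partMap (Sum.inr e) = Sum.inr (edgeMap e)

/-- The identity strict graph morphism. -/
def StrictHom.id (G : Multigraph) : StrictHom G G where
  toHom := Hom.id G
  edgeMap := _root_.id
  partMap_edge := fun _ => rfl

/-- Composition of strict graph morphisms. -/
def StrictHom.comp {G H K : Multigraph} (g : StrictHom H K) (f : StrictHom G H) :
    StrictHom G K where
  toHom := g.toHom.comp f.toHom
  edgeMap := g.edgeMap ∘ f.edgeMap
  partMap_edge := fun e => by
    simp [Hom.comp, f.partMap_edge, g.partMap_edge]

end Multigraph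


open Multigraph

namespace StGrphsAux

variable {A B : Multigraph}

def RV (f : StrictHom A B) : (B.V ⊕ B.V) → (B.V ⊕ B.V) → Prop :=
  fun x y => ∃ v, x = Sum.inl (f.vertMap v) ∧ y = Sum.inr (f.vertMap v)

def RE (f : StrictHom A B) : (B.E ⊕ B.E) → (B.E ⊕ B.E) → Prop :=
  fun x y => ∃ e, x = Sum.inl (f.edgeMap e) ∧ y = Sum.inr (f.edgeMap e)

lemma edge_incid (f : StrictHom A B) (e : A.E) :
    B.ψ (f.edgeMap e) = (A.ψ e).map f.vertMap := by
  have h := f.incid_partMap (Sum.inr e)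
  rw [f.partMap_edge] at h
  simpa [Multigraph.incid] using h

lemma vq_eq (f : StrictHom A B) (v : A.V) :
    Quot.mk (RV f) (Sum.inl (f.vertMap v)) = Quot.mk (RV f) (Sum.inr (f.vertMap v)) :=
  Quot.sound ⟨v, rfl, rfl⟩

def C (f : StrictHom A B) : Multigraph where
  V := Quot (RV f)
  E := Quot (RE f)
  ψ := Quot.lift
      (Sum.elim (fun e => (B.ψ e).map (Quot.mk (RV f) ∘ Sum.inl))
                (fun e => (B.ψ e).map (Quot.mk (RV f) ∘ Sum.inr)))
      (by
        rintro x y ⟨a, rfl, rfl⟩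
        simp only [Sum.elim_inl, Sum.elim_inr, edge_incid f a, Sym2.map_map]
        congr 1
        funext v
        exact vq_eq f v)

def gL (f : StrictHom A B) : StrictHom B (C f) where
  partMap := Sum.map (Quot.mk (RV f) ∘ Sum.inl) (Quot.mk (RE f) ∘ Sum.inl)
  vertMap := Quot.mk (RV f) ∘ Sum.inl
  partMap_vert := fun _ => rfl
  edgeMap := Quot.mk (RE f) ∘ Sum.inl
  partMap_edge := fun _ => rfl
  incid_partMap := fun p => by
    cases p with
    | inl v => simp [Multigraph.incid, C]
    | inr e => simp [Multigraph.incid, C]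

def gR (f : StrictHom A B) : StrictHom B (C f) where
  partMap := Sum.map (Quot.mk (RV f) ∘ Sum.inr) (Quot.mk (RE f) ∘ Sum.inr)
  vertMap := Quot.mk (RV f) ∘ Sum.inr
  partMap_vert := fun _ => rfl
  edgeMap := Quot.mk (RE f) ∘ Sum.inr
  partMap_edge := fun _ => rfl
  incid_partMap := fun p => by
    cases p with
    | inl v => simp [Multigraph.incid, C]
    | inr e => simp [Multigraph.incid, C]

lemma comp_eq (f : StrictHom A B) : (gL f).comp f = (gR f).comp f := by
  ext p
  · cases p with
    | inl v =>
      show (gL f).partMap (f.partMap (Sum.inl v)) = (gR f).partMap (f.partMap (Sum.inl v))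
      rw [f.partMap_vert]
      exact congrArg Sum.inl (vq_eq f v)
    | inr e =>
      show (gL f).partMap (f.partMap (Sum.inr e)) = (gR f).partMap (f.partMap (Sum.inr e))
      rw [f.partMap_edge]
      exact congrArg Sum.inr (Quot.sound ⟨e, rfl, rfl⟩)
  · exact vq_eq f p
  · exact Quot.sound ⟨p, rfl, rfl⟩

lemma range_of_vq (f : StrictHom A B) (b : B.V)
    (h : Quot.mk (RV f) (Sum.inl b) = Quot.mk (RV f) (Sum.inr b)) :
    b ∈ Set.range f.vertMap := by
  have hF : ∀ x y, RV f x y →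
      Sum.elim (fun b => b ∈ Set.range f.vertMap) (fun _ => True) x =
      Sum.elim (fun b => b ∈ Set.range f.vertMap) (fun _ => True) y := by
    rintro x y ⟨v, rfl, rfl⟩
    simp only [Sum.elim_inl, Sum.elim_inr, eq_iff_iff, iff_true]
    exact ⟨v, rfl⟩
  have := congrArg (Quot.lift _ hF) h
  simpa using this

lemma range_of_eq (f : StrictHom A B) (e : B.E)
    (h : Quot.mk (RE f) (Sum.inl e) = Quot.mk (RE f) (Sum.inr e)) :
    e ∈ Set.range f.edgeMap := by
  have hF : ∀ x y, RE f x y →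
      Sum.elim (fun e => e ∈ Set.range f.edgeMap) (fun _ => True) x =
      Sum.elim (fun e => e ∈ Set.range f.edgeMap) (fun _ => True) y := by
    rintro x y ⟨a, rfl, rfl⟩
    simp only [Sum.elim_inl, Sum.elim_inr, eq_iff_iff, iff_true]
    exact ⟨a, rfl⟩
  have := congrArg (Quot.lift _ hF) h
  simpa using this

/-- single-vertex test graph -/
def pt : Multigraph where
  V := Unit
  E := Empty
  ψ := Empty.elim

def ptHom (G : Multigraph) (v : G.V) : StrictHom pt G where
  partMap := fun _ => Sum.inl v
  vertMap := fun _ => v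
  partMap_vert := fun _ => rfl
  edgeMap := Empty.elim
  partMap_edge := fun e => e.elim
  incid_partMap := fun p => by
    cases p with
    | inl u => simp [Multigraph.incid]
    | inr e => exact e.elim

/-- single-edge test graph over A -/
def edgeG (G : Multigraph) (e : G.E) : Multigraph where
  V := G.V
  E := Unit
  ψ := fun _ => G.ψ e

def edgeHom (G : Multigraph) (e e' : G.E) (h : G.ψ e' = G.ψ e) :
    StrictHom (edgeG G e) G where
  partMap := Sum.map _root_.id (fun _ => e')
  vertMap := _root_.id
  partMap_vert := fun _ => rfl
  edgeMap := fun _ => e'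
  partMap_edge := fun _ => rfl
  incid_partMap := fun p => by
    cases p with
    | inl v => rfl
    | inr u =>
      show G.ψ e' = Sym2.map _root_.id (G.ψ e)
      rw [Sym2.map_id]; exact h

end StGrphsAux

open Multigraph in
/-- In the category **StGrphs** of multigraphs with strict graph morphisms, a morphism is an
epimorphism iff its part-set function is surjective, and a monomorphism iff its
part-set function is injective. -/
theorem stgrphs_epi_iff_surjective_and_mono_iff_injective
    (A B : Multigraph) (f : StrictHom A B) :
    ((∀ (C : Multigraph) (g h : StrictHom B C), g.comp f = h.comp f → g = h) ↔
      Function.Surjective f.partMap) ∧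
    ((∀ (C : Multigraph) (g h : StrictHom C A), f.comp g = f.comp h → g = h) ↔
      Function.Injective f.partMap) := by
  classical
  open StGrphsAux in
  constructor
  · constructor
    · -- epi → surjective
      intro hepi p
      have h := hepi (C f) (gL f) (gR f) (comp_eq f)
      cases p with
      | inl b =>
        have hv : (gL f).vertMap b = (gR f).vertMap b := by rw [h]
        obtain ⟨v, rfl⟩ := range_of_vq f b hv
        exact ⟨Sum.inl v, f.partMap_vert v⟩
      | inr e =>
        have he : (gL f).edgeMap e = (gR f).edgeMap e := by rw [h]
        obtain ⟨a, rfl⟩ := range_of_eq f e he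
        exact ⟨Sum.inr a, f.partMap_edge a⟩
    · -- surjective → epi
      intro hsurj C g h hc
      have hp : g.partMap = h.partMap := by
        funext q
        obtain ⟨p, rfl⟩ := hsurj q
        exact congrFun (congrArg (fun k => k.partMap) hc) p
      have hv : g.vertMap = h.vertMap := by
        funext v
        have := congrFun hp (Sum.inl v)
        rw [g.partMap_vert, h.partMap_vert] at this
        exact Sum.inl.inj this
      have he : g.edgeMap = h.edgeMap := by
        funext e
        have := congrFun hp (Sum.inr e)
        rw [g.partMap_edge, h.partMap_edge] at this
        exact Sum.inr.inj this
      ext p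
      · exact congrFun hp p
      · exact congrFun hv p
      · exact congrFun he p
  · constructor
    · -- mono → injective
      intro hmono
      have hvinj : Function.Injective f.vertMap := by
        intro v₁ v₂ hv
        have := hmono pt (ptHom A v₁) (ptHom A v₂) (by
          ext p
          · cases p with
            | inl u =>
              show f.partMap (Sum.inl v₁) = f.partMap (Sum.inl v₂)
              rw [f.partMap_vert, f.partMap_vert, hv]
            | inr e => exact e.elim
          · exact hv
          · exact p.elim)
        exact congrFun (congrArg (fun k => k.vertMap) this) ()
      intro p₁ p₂ hp
      cases p₁ with
      | inl v₁ =>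
        cases p₂ with
        | inl v₂ =>
          rw [f.partMap_vert, f.partMap_vert] at hp
          exact congrArg Sum.inl (hvinj (Sum.inl.inj hp))
        | inr e₂ =>
          rw [f.partMap_vert, f.partMap_edge] at hp
          exact absurd hp (Sum.inl_ne_inr)
      | inr e₁ =>
        cases p₂ with
        | inl v₂ =>
          rw [f.partMap_edge, f.partMap_vert] at hp
          exact absurd hp (Sum.inr_ne_inl)
        | inr e₂ =>
          rw [f.partMap_edge, f.partMap_edge] at hp
          have he : f.edgeMap e₁ = f.edgeMap e₂ := Sum.inr.inj hp
          have hψ : A.ψ e₂ = A.ψ e₁ := by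
            have h₁ := edge_incid f e₁
            have h₂ := edge_incid f e₂
            rw [he, h₂] at h₁
            exact Sym2.map.injective hvinj h₁
          have := hmono (edgeG A e₁) (edgeHom A e₁ e₁ rfl) (edgeHom A e₁ e₂ hψ) (by
            ext p
            · cases p with
              | inl v => rfl
              | inr u =>
                show f.partMap (Sum.inr e₁) = f.partMap (Sum.inr e₂)
                rw [f.partMap_edge, f.partMap_edge, he]
            · rfl
            · exact he)
          have := congrFun (congrArg (fun k => k.edgeMap) this) ()
          exact congrArg Sum.inr this
    · -- injective → mono
      intro hinj C g h hc
      have hp : g.partMap = h.partMap := by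
        funext p
        apply hinj
        exact congrFun (congrArg (fun k => k.partMap) hc) p
      have hv : g.vertMap = h.vertMap := by
        funext v
        have := congrFun hp (Sum.inl v)
        rw [g.partMap_vert, h.partMap_vert] at this
        exact Sum.inl.inj this
      have he : g.edgeMap = h.edgeMap := by
        funext e
        have := congrFun hp (Sum.inr e)
        rw [g.partMap_edge, h.partMap_edge] at this
        exact Sum.inr.inj this
      ext p
      · exact congrFun hp p
      · exact congrFun hv p
      · exact congrFun he p
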